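/- Let φ be a white-noise random dynamical system on a complete separable metric space (E,d) over an ergodic metric dynamical system. If weak synchronization holds for φ with synchronizing random point a : Ω → E, then the measure ρ := E[δ_{a(ω)}] is an invariant probability measure, φ is strongly mixing with respect to ρ, and for all x,y ∈ E the distance d(φ_t(·,x), φ_t(·,y)) converges to 0 in probability as t → ∞; in particular φ satisfies weak global pointwise stability. -/

import Mathlib

open MeasureTheory ProbabilityTheory Filter Topology
open scoped ENNReal

/-- A white-noise (filtered) random dynamical system on a metric space `E` over an ergodic
metric dynamical system `θ` on a probability space `(Ω, F, P)`. -/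
structure WhiteNoiseRDS (Ω E : Type) [MeasurableSpace Ω] [MetricSpace E]
    [MeasurableSpace E] [BorelSpace E] where
  /-- the underlying probability measure -/
  P : Measure Ω
  P_prob : IsProbabilityMeasure P
  /-- the metric dynamical system (group of shifts) -/
  θ : ℝ → Ω → Ω
  θ_meas : ∀ t, Measurable (θ t)
  θ_zero : ∀ ω, θ 0 ω = ω
  θ_add : ∀ s t : ℝ, ∀ ω, θ (s + t) ω = θ s (θ t ω)
  θ_preserves : ∀ t, MeasurePreserving (θ t) P P
  θ_ergodic : ∀ A : Set Ω, MeasurableSet A → (∀ t, θ t ⁻¹' A = A) → P A = 0 ∨ P A = 1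
  /-- the cocycle -/
  φ : ℝ → Ω → E → E
  φ_meas : Measurable fun p : ℝ × Ω × E => φ p.1 p.2.1 p.2.2
  φ_zero : ∀ ω x, φ 0 ω x = x
  φ_cocycle : ∀ s t : ℝ, 0 ≤ s → 0 ≤ t → ∀ ω x, φ (t + s) ω x = φ t (θ s ω) (φ s ω x)
  φ_cont : ∀ s : ℝ, 0 ≤ s → ∀ ω, Continuous fun x => φ s ω x
  /-- two-parameter filtration -/
  F : ℝ → ℝ → MeasurableSpace Ω
  F_le : ∀ s t : ℝ, F s t ≤ ‹MeasurableSpace Ω›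
  F_mono : ∀ s t u v : ℝ, s ≤ t → t ≤ u → u ≤ v → F t u ≤ F s v
  F_shift : ∀ r s t : ℝ, F (s + r) (t + r) = MeasurableSpace.comap (θ r) (F s t)
  F_indep : ∀ (n : ℕ) (ts : Fin (n + 1) → ℝ), Monotone ts →
    iIndep (fun i : Fin n => F (ts i.castSucc) (ts i.succ)) P
  φ_adapted : ∀ s : ℝ, 0 ≤ s → ∀ x : E, Measurable[F 0 s] fun ω => φ s ω x

namespace WhiteNoiseRDS

variable {Ω E : Type} [MeasurableSpace Ω] [MetricSpace E] [MeasurableSpace E] [BorelSpace E]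

/-- `F_0`: the smallest σ-algebra containing all `F s 0`, `s ≤ 0`. -/
def F0 (R : WhiteNoiseRDS Ω E) : MeasurableSpace Ω := ⨆ s ∈ Set.Iic (0 : ℝ), R.F s 0

/-- `ρ` is an invariant probability measure for the Markov semigroup associated to `φ`. -/
def Invariant (R : WhiteNoiseRDS Ω E) (ρ : Measure E) : Prop :=
  ∀ t : ℝ, 0 ≤ t → ∀ f : BoundedContinuousFunction E ℝ,
    ∫ x, (∫ ω, f (R.φ t ω x) ∂ R.P) ∂ρ = ∫ x, f x ∂ρ

/-- `φ` is strongly mixing w.r.t. `ρ`: the law of `φ_t(·,x)` converges weakly to `ρ`. -/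
def StronglyMixing (R : WhiteNoiseRDS Ω E) (ρ : Measure E) : Prop :=
  ∀ x : E, ∀ f : BoundedContinuousFunction E ℝ,
    Tendsto (fun t : ℝ => ∫ ω, f (R.φ t ω x) ∂ R.P) atTop (𝓝 (∫ y, f y ∂ρ))

/-- Weak global pointwise stability: there is a Borel set `U` of full `ρ`-measure and times
`t n ↑ ∞` such that any two points of `U` come `η`-close along `t n` with probability
bounded below by some `δ(x,y) > 0`. -/
def WeakGlobalPointwiseStability (R : WhiteNoiseRDS Ω E) (ρ : Measure E) : Prop :=
  ∃ U : Set E, MeasurableSet U ∧ ρ U = 1 ∧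
    ∃ t : ℕ → ℝ, StrictMono t ∧ Tendsto t atTop atTop ∧
      ∀ x ∈ U, ∀ y ∈ U, ∃ δ : ℝ≥0∞, 0 < δ ∧ ∀ η : ℝ, 0 < η →
        δ ≤ liminf (fun n => R.P {ω | dist (R.φ (t n) ω x) (R.φ (t n) ω y) ≤ η}) atTop

/-- Weak synchronization: there is an `F_0`-measurable random point `a` which is invariant
under the flow and attracts every deterministic point in probability (in the pullback sense). -/
def WeakSynchronization (R : WhiteNoiseRDS Ω E) : Prop :=
  ∃ a : Ω → E, Measurable[R.F0] a ∧
    (∀ t : ℝ, 0 ≤ t → ∀ᵐ ω ∂ R.P, R.φ t ω (a ω) = a (R.θ t ω)) ∧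
    ∀ x : E, ∀ ε : ℝ, 0 < ε →
      Tendsto (fun t : ℝ => R.P {ω | ε ≤ dist (R.φ t (R.θ (-t) ω) x) (a ω)}) atTop (𝓝 0)

end WhiteNoiseRDS

open scoped NNReal
open BoundedContinuousFunction

lemma freeze {Ω E : Type} [mΩ : MeasurableSpace Ω] [MetricSpace E] [mE : MeasurableSpace E]
    [BorelSpace E] [SecondCountableTopology E]
    (P : Measure Ω) [IsProbabilityMeasure P]
    (m2 : {m : MeasurableSpace Ω // m ≤ mΩ})
    (a : Ω → E) (ha : Measurable a)
    (hInd : Indep (MeasurableSpace.comap a mE) m2.1 P)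
    (u : E → Ω → E) (hu_cont : ∀ ω, Continuous fun x => u x ω)
    (hu_meas : ∀ x, Measurable[m2.1] (u x))
    (f : BoundedContinuousFunction E ℝ) :
    ∫ ω, f (u (a ω) ω) ∂P = ∫ x, (∫ ω, f (u x ω) ∂P) ∂(P.map a) := by
  have hid : @Measurable Ω Ω mΩ m2.1 id := measurable_id'' m2.2
  set ν : @Measure Ω m2.1 := @Measure.map Ω Ω mΩ m2.1 id P with hν
  haveI hνp : IsProbabilityMeasure ν :=
    @Measure.isProbabilityMeasure_map Ω Ω mΩ m2.1 P _ id
      (@Measurable.aemeasurable Ω Ω mΩ m2.1 id P hid)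
  haveI hρp : IsProbabilityMeasure (P.map a) := Measure.isProbabilityMeasure_map ha.aemeasurable
  have hIndF : @IndepFun Ω E Ω mΩ mE m2.1 a id P := by
    rw [← MeasurableSpace.comap_id (m := m2.1)] at hInd
    exact hInd
  have hmap : @Measure.map Ω (E × Ω) mΩ (@Prod.instMeasurableSpace E Ω mE m2.1)
      (fun ω => (a ω, id ω)) P = @Measure.prod E Ω mE m2.1 (P.map a) ν := by
    exact (@indepFun_iff_map_prod_eq_prod_map_map Ω E Ω mΩ P a id mE m2.1 _
      ha.aemeasurable (@Measurable.aemeasurable Ω Ω mΩ m2.1 id P hid)).mp hIndF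
  have hU : @Measurable (E × Ω) E (@Prod.instMeasurableSpace E Ω mE m2.1) mE
      (Function.uncurry u) :=
    measurable_uncurry_of_continuous_of_measurable hu_cont hu_meas
  have hH : @Measurable (E × Ω) ℝ (@Prod.instMeasurableSpace E Ω mE m2.1) _
      (fun p => f (u p.1 p.2)) := f.continuous.measurable.comp hU
  have hHsm : @StronglyMeasurable (E × Ω) ℝ _ (@Prod.instMeasurableSpace E Ω mE m2.1)
      (fun p => f (u p.1 p.2)) := hH.stronglyMeasurable
  have hT : @Measurable Ω (E × Ω) mΩ (@Prod.instMeasurableSpace E Ω mE m2.1)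
      (fun ω => (a ω, id ω)) := Measurable.prodMk ha hid
  have step1 : ∫ ω, f (u (a ω) ω) ∂P
      = ∫ p, f (u p.1 p.2) ∂(@Measure.map Ω (E × Ω) mΩ (@Prod.instMeasurableSpace E Ω mE m2.1)
          (fun ω => (a ω, id ω)) P) :=
    (@integral_map Ω ℝ _ _ mΩ P (E × Ω) (@Prod.instMeasurableSpace E Ω mE m2.1)
      (fun ω => (a ω, id ω))
      (@Measurable.aemeasurable Ω (E × Ω) mΩ (@Prod.instMeasurableSpace E Ω mE m2.1)
        (fun ω => (a ω, id ω)) P hT) (fun p => f (u p.1 p.2))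
      hHsm.aestronglyMeasurable).symm
  have hInt : @Integrable ℝ _ _ (E × Ω) (@Prod.instMeasurableSpace E Ω mE m2.1)
      (fun p => f (u p.1 p.2)) (@Measure.prod E Ω mE m2.1 (P.map a) ν) := by
    refine Integrable.mono' (integrable_const ‖f‖) hHsm.aestronglyMeasurable
      (ae_of_all _ fun p => ?_)
    exact f.norm_coe_le_norm _
  have step3 : ∫ p, f (u p.1 p.2) ∂(@Measure.prod E Ω mE m2.1 (P.map a) ν)
      = ∫ x, (∫ ω, f (u x ω) ∂ν) ∂(P.map a) :=
    @integral_prod E Ω ℝ mE m2.1 (P.map a) ν _ _ _ _ _ hInt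
  have step4 : ∀ x : E, ∫ ω, f (u x ω) ∂ν = ∫ ω, f (u x ω) ∂P := fun x =>
    @integral_map Ω ℝ _ _ mΩ P Ω m2.1 id (@Measurable.aemeasurable Ω Ω mΩ m2.1 id P hid)
      (fun ω => f (u x ω))
      ((f.continuous.measurable.comp (hu_meas x)).stronglyMeasurable.aestronglyMeasurable)
  rw [step1, hmap, step3]
  exact integral_congr_ae (ae_of_all _ fun x => step4 x)


lemma pm_liminf {E : Type} [MeasurableSpace E] (μs : ℕ → ProbabilityMeasure E) (G : Set E) :
    (↑(atTop.liminf (fun n => μs n G)) : ℝ≥0∞) = atTop.liminf (fun n => (μs n).toMeasure G) := by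
  have aux : ENNReal.ofNNReal (liminf (fun n ↦ μs n G) atTop) =
      liminf (ENNReal.ofNNReal ∘ fun n ↦ μs n G) atTop := by
    refine Monotone.map_liminf_of_continuousAt (F := atTop) ENNReal.coe_mono (μs · G) ?_ ?_ ?_
    · exact ENNReal.continuous_coe.continuousAt
    · exact IsBoundedUnder.isCoboundedUnder_ge ⟨1, by simp⟩
    · exact ⟨0, by simp⟩
  rw [aux]
  congr 1
  funext n
  simp [Function.comp, ProbabilityMeasure.ennreal_coeFn_eq_coeFn_toMeasure]

lemma mixing_aux {Ω E : Type} [mΩ : MeasurableSpace Ω] [MetricSpace E] [mE : MeasurableSpace E]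
    [BorelSpace E]
    (P : Measure Ω) [IsProbabilityMeasure P]
    (X Y : ℕ → Ω → E) (hX : ∀ n, Measurable (X n)) (hY : ∀ n, Measurable (Y n))
    (ρ : Measure E) [IsProbabilityMeasure ρ]
    (hlaw : ∀ n, P.map (Y n) = ρ)
    (hdist : ∀ ε : ℝ, 0 < ε →
      Tendsto (fun n => P {ω | ε ≤ dist (X n ω) (Y n ω)}) atTop (𝓝 0))
    (f : BoundedContinuousFunction E ℝ) :
    Tendsto (fun n => ∫ ω, f (X n ω) ∂P) atTop (𝓝 (∫ y, f y ∂ρ)) := by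
  set μs : ℕ → ProbabilityMeasure E :=
    fun n => ⟨P.map (X n), Measure.isProbabilityMeasure_map (hX n).aemeasurable⟩ with hμs
  set μP : ProbabilityMeasure E := ⟨ρ, inferInstance⟩ with hμP
  have hE : ∀ G : Set E, IsOpen G → ρ G ≤ atTop.liminf (fun n => P.map (X n) G) := by
    intro G hG
    by_cases huniv : G = Set.univ
    · subst huniv
      have h1 : ∀ n, P.map (X n) Set.univ = 1 := fun n => by
        rw [Measure.map_apply (hX n) MeasurableSet.univ]; simp
      simp only [h1, measure_univ, liminf_const]
      exact le_rfl
    · have hGc : Gᶜ.Nonempty := Set.nonempty_compl.mpr huniv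
      have hεk : ∀ k : ℕ, (0:ℝ) < 1 / ((k : ℝ) + 1) := fun k => by positivity
      set s : ℕ → Set E :=
        fun k => {y | ENNReal.ofReal (1 / ((k : ℝ) + 1)) ≤ EMetric.infEdist y Gᶜ} with hs
      have hsmono : Monotone s := by
        intro k l hkl y hy
        simp only [hs, Set.mem_setOf_eq] at hy ⊢
        refine le_trans (ENNReal.ofReal_le_ofReal ?_) hy
        refine one_div_le_one_div_of_le (by positivity) (by exact_mod_cast Nat.succ_le_succ hkl)
      have hsU : (⋃ k, s k) = G := by
        ext y
        constructor
        · intro hy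
          obtain ⟨k, hk⟩ := Set.mem_iUnion.mp hy
          simp only [hs, Set.mem_setOf_eq] at hk
          by_contra hyG
          have hyG' : y ∈ Gᶜ := hyG
          rw [show EMetric.infEdist y Gᶜ = 0 from Metric.infEDist_zero_of_mem hyG'] at hk
          simp only [nonpos_iff_eq_zero, ENNReal.ofReal_eq_zero] at hk
          linarith [hεk k]
        · intro hy
          obtain ⟨r, hr, hball⟩ := Metric.isOpen_iff.mp hG y hy
          obtain ⟨k, hk⟩ := exists_nat_one_div_lt hr
          refine Set.mem_iUnion.mpr ⟨k, ?_⟩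
          simp only [hs, Set.mem_setOf_eq]
          refine EMetric.le_infEdist.mpr fun z hz => ?_
          have hzb : z ∉ Metric.ball y r := fun hzb => hz (hball hzb)
          rw [Metric.mem_ball, dist_comm] at hzb
          push_neg at hzb
          rw [edist_dist]
          exact le_trans (ENNReal.ofReal_le_ofReal hk.le) (ENNReal.ofReal_le_ofReal hzb)
      have hsk_meas : ∀ k, MeasurableSet (s k) := fun k =>
        (isClosed_le continuous_const EMetric.continuous_infEdist).measurableSet
      have hGm : MeasurableSet G := hG.measurableSet
      have hbound : ∀ k, ρ (s k) ≤ atTop.liminf (fun n => P.map (X n) G) := by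
        intro k
        have herr := hdist _ (hεk k)
        rw [le_liminf_iff]
        intro b hb
        have hfin : ρ (s k) ≤ 1 := prob_le_one
        have hδpos : 0 < (ρ (s k) - b) / 2 := by
          rw [ENNReal.div_pos_iff]
          exact ⟨by simpa [tsub_eq_zero_iff_le] using not_le.mpr hb, by norm_num⟩
        set δ : ℝ≥0∞ := (ρ (s k) - b) / 2 with hδ
        have hδtop : δ ≠ ∞ := by
          refine ne_top_of_le_ne_top (by norm_num : (1:ℝ≥0∞)/2 ≠ ∞) ?_
          exact ENNReal.div_le_div_right (le_trans tsub_le_self hfin) 2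
        have hev : ∀ᶠ n in atTop,
            P {ω | 1 / ((k:ℝ) + 1) ≤ dist (X n ω) (Y n ω)} < δ := herr (Iio_mem_nhds hδpos)
        filter_upwards [hev] with n hn
        have hincl : (Y n) ⁻¹' (s k) ⊆ (X n) ⁻¹' G ∪
            {ω | 1 / ((k:ℝ) + 1) ≤ dist (X n ω) (Y n ω)} := by
          intro ω hω
          simp only [hs, Set.mem_preimage, Set.mem_setOf_eq] at hω
          by_cases hx : X n ω ∈ G
          · exact Or.inl hx
          · refine Or.inr ?_
            have h1 : EMetric.infEdist (Y n ω) Gᶜ ≤ edist (Y n ω) (X n ω) :=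
              EMetric.infEdist_le_edist_of_mem hx
            have h2 : ENNReal.ofReal (1 / ((k:ℝ) + 1))
                ≤ ENNReal.ofReal (dist (Y n ω) (X n ω)) := by
              rw [← edist_dist]
              exact le_trans hω h1
            have h3 := (ENNReal.ofReal_le_ofReal_iff dist_nonneg).mp h2
            simpa [dist_comm] using h3
        have hkey : ρ (s k) ≤ P.map (X n) G
            + P {ω | 1 / ((k:ℝ) + 1) ≤ dist (X n ω) (Y n ω)} := by
          have h1 : ρ (s k) = P ((Y n) ⁻¹' (s k)) := by
            rw [← hlaw n, Measure.map_apply (hY n) (hsk_meas k)]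
          have h2 : P.map (X n) G = P ((X n) ⁻¹' G) := Measure.map_apply (hX n) hGm
          rw [h1, h2]
          exact le_trans (measure_mono hincl) (measure_union_le _ _)
        have hfin' : P.map (X n) G ≠ ∞ := measure_ne_top _ _
        have h3 : ρ (s k) < P.map (X n) G + δ :=
          lt_of_le_of_lt hkey (ENNReal.add_lt_add_left hfin' hn)
        have h4 : b + δ + δ = ρ (s k) := by
          rw [hδ, add_assoc, ENNReal.add_halves, add_tsub_cancel_of_le hb.le]
        rw [← h4] at h3
        have h5 : b + δ < P.map (X n) G := by
          rwa [ENNReal.add_lt_add_iff_right hδtop] at h3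
        exact lt_of_le_of_lt le_self_add h5
      have htend : Tendsto (fun k => ρ (s k)) atTop (𝓝 (ρ G)) := by
        have := tendsto_measure_iUnion_atTop (μ := ρ) hsmono
        rwa [hsU] at this
      exact le_of_tendsto' htend hbound
  have h_opens : ∀ G, IsOpen G → μP G ≤ atTop.liminf (fun n => μs n G) := by
    intro G hG
    have h1 : ((μP G : ℝ≥0) : ℝ≥0∞) ≤ (↑(atTop.liminf (fun n => μs n G)) : ℝ≥0∞) := by
      rw [pm_liminf]
      simpa [μP, μs, ProbabilityMeasure.ennreal_coeFn_eq_coeFn_toMeasure] using hE G hG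
    exact_mod_cast h1
  have hconv := MeasureTheory.tendsto_of_forall_isOpen_le_liminf h_opens
  have hint := ProbabilityMeasure.tendsto_iff_forall_integral_tendsto.mp hconv f
  have e1 : ∀ n, ∫ x, f x ∂(μs n).toMeasure = ∫ ω, f (X n ω) ∂P := fun n =>
    integral_map (hX n).aemeasurable f.continuous.aestronglyMeasurable
  have e2 : ∫ x, f x ∂μP.toMeasure = ∫ y, f y ∂ρ := rfl
  rw [e2] at hint
  exact hint.congr fun n => e1 n

/-- **Remark (converse).** If weak synchronization holds for a white-noise RDS on a complete
separable metric space, with synchronizing `F_0`-measurable random point `a`, then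
`ρ := P ∘ a⁻¹ = E[δ_{a(ω)}]` is an invariant probability measure, `φ` is strongly mixing
w.r.t. `ρ`, the distance of any two trajectories converges to `0` in probability, and in
particular `φ` satisfies weak global pointwise stability. -/
theorem converse_of_weakSynchronization
    {Ω E : Type} [MeasurableSpace Ω] [MetricSpace E] [CompleteSpace E]
    [TopologicalSpace.SeparableSpace E] [MeasurableSpace E] [BorelSpace E]
    (R : WhiteNoiseRDS Ω E) (a : Ω → E)
    (ha_meas : Measurable[R.F0] a)
    (ha_inv : ∀ t : ℝ, 0 ≤ t → ∀ᵐ ω ∂ R.P, R.φ t ω (a ω) = a (R.θ t ω))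
    (ha_attr : ∀ x : E, ∀ ε : ℝ, 0 < ε →
      Filter.Tendsto (fun t : ℝ => R.P {ω | ε ≤ dist (R.φ t (R.θ (-t) ω) x) (a ω)})
        Filter.atTop (nhds 0)) :
    MeasureTheory.IsProbabilityMeasure (R.P.map a) ∧
    R.Invariant (R.P.map a) ∧
    R.StronglyMixing (R.P.map a) ∧
    (∀ x y : E, ∀ ε : ℝ, 0 < ε →
      Filter.Tendsto (fun t : ℝ => R.P {ω | ε ≤ dist (R.φ t ω x) (R.φ t ω y)})
        Filter.atTop (nhds 0)) ∧
    R.WeakGlobalPointwiseStability (R.P.map a) := by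
  haveI : IsProbabilityMeasure R.P := R.P_prob
  haveI : SecondCountableTopology E := UniformSpace.secondCountable_of_separable E
  have hF0_le : R.F0 ≤ ‹MeasurableSpace Ω› := iSup₂_le fun s _ => R.F_le s 0
  have hA : Measurable a := ha_meas.mono hF0_le le_rfl
  haveI hρ : IsProbabilityMeasure (R.P.map a) := Measure.isProbabilityMeasure_map hA.aemeasurable
  have hXmeas : ∀ (t : ℝ) (x : E), Measurable fun ω => R.φ t ω x := fun t x =>
    R.φ_meas.comp (measurable_const.prodMk (measurable_id.prodMk measurable_const))
  have hθ : ∀ t, Measurable (R.θ t) := R.θ_meas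
  -- the forward-attraction property
  have key : ∀ (x : E) (ε : ℝ), 0 < ε →
      Tendsto (fun t : ℝ => R.P {ω | ε ≤ dist (R.φ t ω x) (a (R.θ t ω))}) atTop (𝓝 0) := by
    intro x ε hε
    refine (ha_attr x ε hε).congr fun t => ?_
    have hst : MeasurableSet {ω | ε ≤ dist (R.φ t (R.θ (-t) ω) x) (a ω)} := by
      have hm : Measurable fun ω => dist (R.φ t (R.θ (-t) ω) x) (a ω) :=
        ((hXmeas t x).comp (hθ (-t))).dist hA
      exact measurableSet_le measurable_const hm
    have hpre := (R.θ_preserves t).measure_preimage hst.nullMeasurableSet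
    have hset : R.θ t ⁻¹' {ω | ε ≤ dist (R.φ t (R.θ (-t) ω) x) (a ω)}
        = {ω | ε ≤ dist (R.φ t ω x) (a (R.θ t ω))} := by
      ext ω
      simp only [Set.mem_preimage, Set.mem_setOf_eq]
      rw [show R.θ (-t) (R.θ t ω) = ω by rw [← R.θ_add, neg_add_cancel, R.θ_zero]]
    rw [hset] at hpre
    exact hpre.symm
  -- part 4 : distance of two trajectories tends to 0 in probability
  have pair : ∀ x y : E, ∀ ε : ℝ, 0 < ε →
      Tendsto (fun t : ℝ => R.P {ω | ε ≤ dist (R.φ t ω x) (R.φ t ω y)}) atTop (𝓝 0) := by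
    intro x y ε hε
    have hε2 : 0 < ε / 2 := by linarith
    have hsum : Tendsto (fun t : ℝ => R.P {ω | ε / 2 ≤ dist (R.φ t ω x) (a (R.θ t ω))}
        + R.P {ω | ε / 2 ≤ dist (R.φ t ω y) (a (R.θ t ω))}) atTop (𝓝 0) := by
      simpa using (key x (ε / 2) hε2).add (key y (ε / 2) hε2)
    refine tendsto_of_tendsto_of_tendsto_of_le_of_le tendsto_const_nhds hsum
      (fun t => zero_le) (fun t => ?_)
    refine le_trans (measure_mono ?_) (measure_union_le _ _)
    intro ω hω
    simp only [Set.mem_setOf_eq] at hω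
    simp only [Set.mem_union, Set.mem_setOf_eq]
    by_contra hcon
    push_neg at hcon
    obtain ⟨hc1, hc2⟩ := hcon
    have htri := dist_triangle (R.φ t ω x) (a (R.θ t ω)) (R.φ t ω y)
    rw [dist_comm (a (R.θ t ω)) (R.φ t ω y)] at htri
    linarith
  -- independence of F0 and F 0 t
  have hIndep : ∀ t : ℝ, 0 ≤ t → Indep R.F0 (R.F 0 t) R.P := by
    intro t ht
    have hpairI : ∀ s : ℝ, s ≤ 0 → Indep (R.F s 0) (R.F 0 t) R.P := by
      intro s hs
      have hts : Monotone ![s, 0, t] := by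
        rw [Fin.monotone_iff_le_succ]
        intro i
        fin_cases i <;> simp [hs, ht]
      have h2 := (R.F_indep 2 ![s, 0, t] hts).indep
        (i := (0 : Fin 2)) (j := (1 : Fin 2)) (by decide)
      simpa using h2
    have hF0eq : R.F0 = ⨆ s : Set.Iic (0:ℝ), R.F s 0 := by
      rw [WhiteNoiseRDS.F0, iSup_subtype]
    rw [hF0eq]
    refine indep_iSup_of_directed_le (fun i => hpairI i i.2) (fun i => R.F_le _ _)
      (R.F_le 0 t) ?_
    intro i j
    exact ⟨⟨min i j, Set.mem_Iic.mpr (le_trans (min_le_left _ _) (Set.mem_Iic.mp i.2))⟩,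
      R.F_mono _ _ _ _ (min_le_left _ _) i.2 le_rfl,
      R.F_mono _ _ _ _ (min_le_right _ _) j.2 le_rfl⟩
  -- invariance
  have hinv : R.Invariant (R.P.map a) := by
    intro t ht f
    have hIndt : Indep (MeasurableSpace.comap a inferInstance) (R.F 0 t) R.P :=
      indep_of_indep_of_le_left (hIndep t ht) ha_meas.comap_le
    have hfreeze := freeze R.P ⟨R.F 0 t, R.F_le 0 t⟩ a hA hIndt
      (fun x ω => R.φ t ω x) (fun ω => R.φ_cont t ht ω) (fun x => R.φ_adapted t ht x) f
    rw [← hfreeze]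
    have e1 : ∫ ω, f (R.φ t ω (a ω)) ∂ R.P = ∫ ω, f (a (R.θ t ω)) ∂ R.P := by
      refine integral_congr_ae ?_
      filter_upwards [ha_inv t ht] with ω hω
      rw [hω]
    have e2 : ∫ ω, f (a ω) ∂(R.P.map (R.θ t)) = ∫ ω, f (a (R.θ t ω)) ∂ R.P :=
      integral_map (hθ t).aemeasurable
        (f.continuous.measurable.comp hA).aestronglyMeasurable
    rw [(R.θ_preserves t).map_eq] at e2
    have e3 : ∫ x, f x ∂(R.P.map a) = ∫ ω, f (a ω) ∂ R.P :=
      integral_map hA.aemeasurable f.continuous.aestronglyMeasurable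
    rw [e1, ← e2, e3]
  -- strong mixing
  have hmix : R.StronglyMixing (R.P.map a) := by
    intro x f
    rw [Filter.tendsto_iff_seq_tendsto]
    intro u hu
    have hXm : ∀ n, Measurable fun ω => R.φ (u n) ω x := fun n => hXmeas (u n) x
    have hYm : ∀ n, Measurable fun ω => a (R.θ (u n) ω) := fun n => hA.comp (hθ (u n))
    have hlaw : ∀ n, R.P.map (fun ω => a (R.θ (u n) ω)) = R.P.map a := fun n => by
      rw [show (fun ω => a (R.θ (u n) ω)) = a ∘ R.θ (u n) from rfl,
        ← Measure.map_map hA (hθ (u n)), (R.θ_preserves (u n)).map_eq]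
    have hdist : ∀ ε : ℝ, 0 < ε → Tendsto
        (fun n => R.P {ω | ε ≤ dist (R.φ (u n) ω x) (a (R.θ (u n) ω))}) atTop (𝓝 0) :=
      fun ε hε => (key x ε hε).comp hu
    exact mixing_aux R.P _ _ hXm hYm _ hlaw hdist f
  -- weak global pointwise stability
  have hstab : R.WeakGlobalPointwiseStability (R.P.map a) := by
    refine ⟨Set.univ, MeasurableSet.univ, by simp, fun n => (n : ℝ),
      Nat.strictMono_cast, tendsto_natCast_atTop_atTop, ?_⟩
    intro x _ y _
    refine ⟨1, zero_lt_one, fun η hη => ?_⟩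
    have hc := (pair x y η hη).comp (tendsto_natCast_atTop_atTop (R := ℝ))
    rw [le_liminf_iff]
    intro b hb
    have hb1 : (0:ℝ≥0∞) < 1 - b := by rwa [tsub_pos_iff_lt]
    have hev := hc (Iio_mem_nhds hb1)
    filter_upwards [hev] with n hn
    have hAm : MeasurableSet {ω | dist (R.φ (n:ℝ) ω x) (R.φ (n:ℝ) ω y) ≤ η} :=
      measurableSet_le ((hXmeas (n:ℝ) x).dist (hXmeas (n:ℝ) y)) measurable_const
    have hcompl : R.P {ω | dist (R.φ (n:ℝ) ω x) (R.φ (n:ℝ) ω y) ≤ η}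
        + R.P {ω | dist (R.φ (n:ℝ) ω x) (R.φ (n:ℝ) ω y) ≤ η}ᶜ = 1 := by
      rw [measure_add_measure_compl hAm, measure_univ]
    have hsub : R.P {ω | dist (R.φ (n:ℝ) ω x) (R.φ (n:ℝ) ω y) ≤ η}ᶜ
        ≤ R.P {ω | η ≤ dist (R.φ (n:ℝ) ω x) (R.φ (n:ℝ) ω y)} := by
      refine measure_mono fun ω hω => ?_
      simp only [Set.mem_compl_iff, Set.mem_setOf_eq, not_le] at hω
      exact le_of_lt hω
    have hcc : R.P {ω | dist (R.φ (n:ℝ) ω x) (R.φ (n:ℝ) ω y) ≤ η}ᶜ < 1 - b :=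
      lt_of_le_of_lt hsub hn
    have h1 : (1:ℝ≥0∞) < R.P {ω | dist (R.φ (n:ℝ) ω x) (R.φ (n:ℝ) ω y) ≤ η} + (1 - b) := by
      calc (1:ℝ≥0∞) = R.P {ω | dist (R.φ (n:ℝ) ω x) (R.φ (n:ℝ) ω y) ≤ η}
          + R.P {ω | dist (R.φ (n:ℝ) ω x) (R.φ (n:ℝ) ω y) ≤ η}ᶜ := hcompl.symm
        _ < _ := ENNReal.add_lt_add_left (measure_ne_top _ _) hcc
    have h2 : b + (1 - b) = 1 := add_tsub_cancel_of_le hb.le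
    by_contra hPA
    push_neg at hPA
    have h3 : R.P {ω | dist (R.φ (n:ℝ) ω x) (R.φ (n:ℝ) ω y) ≤ η} + (1 - b)
        ≤ b + (1 - b) := add_le_add_left hPA _
    rw [h2] at h3
    exact absurd h1 (not_lt.mpr h3)
  exact ⟨hρ, hinv, hmix, pair, hstab⟩
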